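/- Let $I, J$ be ideals of the polynomial ring $\mathbb{C}[z_1,\dots,z_d]$, and for an ideal $K$ let $Z(K)$ denote the set of commuting $d$-tuples of complex matrices (of all finite sizes $n \ge 1$) on which every element of $K$ vanishes. Then $\mathbb{C}[z]/I$ and $\mathbb{C}[z]/J$ are isomorphic as $\mathbb{C}$-algebras if and only if there exist polynomial maps $F, G \in \mathbb{C}[z]^d$ restricting to mutually inverse bijections between $Z(J)$ and $Z(I)$. -/

import Mathlib

/-- Evaluation of a commutative polynomial at a `d`-tuple of (commuting) `n × n` matrices. -/
noncomputable def evalMat {d n : ℕ} (X : Fin d → Matrix (Fin n) (Fin n) ℂ)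
    (p : MvPolynomial (Fin d) ℂ) : Matrix (Fin n) (Fin n) ℂ :=
  ∑ m ∈ p.support, p.coeff m • (List.ofFn fun i => X i ^ m i).prod

/-- `X` belongs to the matrix zero set `Z(K)` of an ideal `K ⊴ ℂ[z₁,…,z_d]`: `X` is a
commuting tuple annihilating every element of `K`. -/
def MemZeroSet {d : ℕ} (K : Ideal (MvPolynomial (Fin d) ℂ)) {n : ℕ}
    (X : Fin d → Matrix (Fin n) (Fin n) ℂ) : Prop :=
  (∀ i j, Commute (X i) (X j)) ∧ ∀ p ∈ K, evalMat X p = 0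

/-- Lemma A : evalMat at the image of the variables under an algebra hom is the hom. -/
theorem evalMat_algHom {d n : ℕ} (f : MvPolynomial (Fin d) ℂ →ₐ[ℂ] Matrix (Fin n) (Fin n) ℂ)
    (p : MvPolynomial (Fin d) ℂ) : evalMat (fun i => f (MvPolynomial.X i)) p = f p := by
  conv_rhs => rw [p.as_sum]
  rw [map_sum, evalMat]
  refine Finset.sum_congr rfl fun m hm => ?_
  have h1 : (MvPolynomial.monomial m) (MvPolynomial.coeff m p)
      = MvPolynomial.coeff m p • (List.ofFn fun i => (MvPolynomial.X i : MvPolynomial (Fin d) ℂ) ^ m i).prod := by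
    rw [List.prod_ofFn, MvPolynomial.monomial_eq, Finsupp.prod_pow]
    rw [MvPolynomial.smul_eq_C_mul]
  rw [h1, map_smul, map_list_prod, List.map_ofFn]
  have h2 : (fun i => f (MvPolynomial.X i) ^ m i) = ⇑f ∘ fun i => MvPolynomial.X i ^ m i := by
    funext i; simp [Function.comp, map_pow]
  rw [h2]

/-- Lemma B : a commuting tuple extends to an algebra hom from the polynomial ring. -/
theorem exists_algHom_of_commute {d n : ℕ} (X : Fin d → Matrix (Fin n) (Fin n) ℂ)
    (hX : ∀ i j, Commute (X i) (X j)) :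
    ∃ f : MvPolynomial (Fin d) ℂ →ₐ[ℂ] Matrix (Fin n) (Fin n) ℂ,
      ∀ i, f (MvPolynomial.X i) = X i := by
  letI : CommRing (Algebra.adjoin ℂ (Set.range X)) :=
    Algebra.adjoinCommRingOfComm ℂ (by rintro a ⟨i, rfl⟩ b ⟨j, rfl⟩; exact hX i j)
  refine ⟨(Algebra.adjoin ℂ (Set.range X)).val.comp
    (MvPolynomial.aeval fun i => (⟨X i, Algebra.subset_adjoin ⟨i, rfl⟩⟩ :
      Algebra.adjoin ℂ (Set.range X))), fun i => by simp⟩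

theorem fd_quot {d : ℕ} (L : Ideal (MvPolynomial (Fin d) ℂ)) (a : Fin d → ℂ) (N : ℕ)
    (hL : ∀ i, (MvPolynomial.X i - MvPolynomial.C (a i)) ^ N ∈ L) :
    FiniteDimensional ℂ (MvPolynomial (Fin d) ℂ ⧸ L) := by
  have hint : ∀ i, IsIntegral ℂ (Ideal.Quotient.mk L (MvPolynomial.X i)) := by
    intro i
    refine ⟨(Polynomial.X - Polynomial.C (a i)) ^ N, (Polynomial.monic_X_sub_C _).pow _, ?_⟩
    rw [← Polynomial.aeval_def]
    have halg : (algebraMap ℂ (MvPolynomial (Fin d) ℂ ⧸ L)) (a i)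
        = Ideal.Quotient.mk L (MvPolynomial.C (a i)) := rfl
    rw [map_pow, map_sub, Polynomial.aeval_X, Polynomial.aeval_C, halg, ← map_sub, ← map_pow]
    exact Ideal.Quotient.eq_zero_iff_mem.mpr (hL i)
  have hadj : Algebra.adjoin ℂ (Set.range fun i => Ideal.Quotient.mk L (MvPolynomial.X i)) = ⊤ := by
    have h0 : (Set.range fun i => Ideal.Quotient.mk L (MvPolynomial.X i))
        = (Ideal.Quotient.mkₐ ℂ L) '' (Set.range MvPolynomial.X) := by
      rw [← Set.range_comp]; rfl
    rw [h0, Algebra.adjoin_image, MvPolynomial.adjoin_range_X, Algebra.map_top,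
      (AlgHom.range_eq_top _).mpr (Ideal.Quotient.mkₐ_surjective ℂ L)]
  have hfg := fg_adjoin_of_finite (Set.finite_range _)
    (by rintro x ⟨i, rfl⟩; exact hint i)
  rw [hadj] at hfg
  exact ⟨by rwa [Algebra.top_toSubmodule] at hfg⟩

set_option maxHeartbeats 1000000 in
theorem mem_of_vanishing {d : ℕ} (K : Ideal (MvPolynomial (Fin d) ℂ)) (q : MvPolynomial (Fin d) ℂ)
    (h : ∀ (n : ℕ) (X : Fin d → Matrix (Fin n) (Fin n) ℂ), MemZeroSet K X → evalMat X q = 0) :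
    q ∈ K := by
  by_contra hq
  have hcol : K.colon (Ideal.span {q}) ≠ ⊤ := by
    intro htop
    have h1 : (1 : MvPolynomial (Fin d) ℂ) ∈ K.colon (Ideal.span {q}) := htop ▸ Submodule.mem_top
    exact hq (by simpa using Ideal.mem_colon_span_singleton.mp h1)
  obtain ⟨m, hmax, hle⟩ := Ideal.exists_le_maximal _ hcol
  have hex : ∃ N : ℕ, q ∉ K ⊔ m ^ N := by
    by_contra h'
    push_neg at h'
    have hmem : Ideal.Quotient.mk K q ∈
        (⨅ i : ℕ, m ^ i • (⊤ : Submodule (MvPolynomial (Fin d) ℂ) (MvPolynomial (Fin d) ℂ ⧸ K))) := by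
      rw [Submodule.mem_iInf]
      intro i
      obtain ⟨k, hk, s, hs, hks⟩ := Submodule.mem_sup.mp (h' i)
      have h1 : Ideal.Quotient.mk K q = Ideal.Quotient.mk K s := by
        rw [Ideal.Quotient.mk_eq_mk_iff_sub_mem]
        have : q - s = k := by rw [← hks]; ring
        rwa [this]
      rw [h1]
      have h2 := Submodule.smul_mem_smul hs
        (Submodule.mem_top : (Ideal.Quotient.mk K (1 : MvPolynomial (Fin d) ℂ)) ∈ ⊤)
      have h3 : s • (Ideal.Quotient.mk K (1 : MvPolynomial (Fin d) ℂ)) = Ideal.Quotient.mk K s := by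
        show s • Submodule.Quotient.mk (1 : MvPolynomial (Fin d) ℂ)
          = Submodule.Quotient.mk (p := (K : Submodule (MvPolynomial (Fin d) ℂ) (MvPolynomial (Fin d) ℂ))) s
        rw [← Submodule.Quotient.mk_smul, smul_eq_mul, mul_one]
      rwa [h3] at h2
    obtain ⟨r, hr⟩ := (Ideal.mem_iInf_smul_pow_eq_bot_iff m (Ideal.Quotient.mk K q)).mp hmem
    have h2 : (1 - (r : MvPolynomial (Fin d) ℂ)) * q ∈ K := by
      rw [sub_mul, one_mul, ← Ideal.Quotient.eq_zero_iff_mem, map_sub, sub_eq_zero]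
      rw [← hr]
      show Submodule.Quotient.mk ((r : MvPolynomial (Fin d) ℂ) * q) = _
      rw [← smul_eq_mul, Submodule.Quotient.mk_smul]
      rfl
    have h3 : (1 - (r : MvPolynomial (Fin d) ℂ)) ∈ m := hle (Ideal.mem_colon_span_singleton.mpr h2)
    have h4 : (1 : MvPolynomial (Fin d) ℂ) ∈ m := by simpa using add_mem h3 r.2
    exact hmax.ne_top ((Ideal.eq_top_iff_one m).mpr h4)
  obtain ⟨N, hN⟩ := hex
  obtain ⟨a, ha⟩ := (MvPolynomial.isMaximal_iff_eq_vanishingIdeal_singleton (I := m)).mp hmax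
  haveI hfd : FiniteDimensional ℂ (MvPolynomial (Fin d) ℂ ⧸ (K ⊔ m ^ N)) := by
    refine fd_quot _ a N fun i => ?_
    refine Ideal.mem_sup_right (Ideal.pow_mem_pow ?_ N)
    rw [ha, MvPolynomial.mem_vanishingIdeal_singleton_iff]
    simp
  set A := MvPolynomial (Fin d) ℂ ⧸ (K ⊔ m ^ N) with hA
  let b := Module.finBasis ℂ A
  let f : MvPolynomial (Fin d) ℂ →ₐ[ℂ] Matrix (Fin (Module.finrank ℂ A)) (Fin (Module.finrank ℂ A)) ℂ :=
    (LinearMap.toMatrixAlgEquiv b).toAlgHom.comp ((Algebra.lmul ℂ A).comp (Ideal.Quotient.mkₐ ℂ _))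
  have hzero : MemZeroSet K fun i => f (MvPolynomial.X i) := by
    refine ⟨fun i j => by rw [Commute, SemiconjBy, ← map_mul, ← map_mul, mul_comm], fun p hp => ?_⟩
    rw [evalMat_algHom]
    have hp0 : Ideal.Quotient.mkₐ ℂ (K ⊔ m ^ N) p = 0 :=
      Ideal.Quotient.eq_zero_iff_mem.mpr (Ideal.mem_sup_left hp)
    simp [f, AlgHom.comp_apply, hp0]
  have h5 := h _ _ hzero
  rw [evalMat_algHom] at h5
  have h6 : Algebra.lmul ℂ A (Ideal.Quotient.mk (K ⊔ m ^ N) q) = 0 := by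
    apply (LinearMap.toMatrixAlgEquiv b).injective
    rw [map_zero]
    exact h5
  have h7 : Ideal.Quotient.mk (K ⊔ m ^ N) q = 0 := by
    have h8 := DFunLike.congr_fun h6 (1 : A)
    rw [LinearMap.zero_apply] at h8
    have h9 : Ideal.Quotient.mk (K ⊔ m ^ N) q * 1 = 0 := h8
    rwa [mul_one] at h9
  exact hN (Ideal.Quotient.eq_zero_iff_mem.mp h7)

/-- Lemma C : evaluating a composition. -/
theorem evalMat_comp {d n : ℕ} (X : Fin d → Matrix (Fin n) (Fin n) ℂ)
    (hX : ∀ i j, Commute (X i) (X j)) (H : Fin d → MvPolynomial (Fin d) ℂ)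
    (p : MvPolynomial (Fin d) ℂ) :
    evalMat (fun i => evalMat X (H i)) p = evalMat X (MvPolynomial.aeval H p) := by
  obtain ⟨f, hf⟩ := exists_algHom_of_commute X hX
  have hXf : X = fun i => f (MvPolynomial.X i) := funext fun i => (hf i).symm
  have hev : ∀ r, evalMat X r = f r := fun r => by rw [hXf]; exact evalMat_algHom f r
  have hg : ∀ r, evalMat (fun i => f (H i)) r = (f.comp (MvPolynomial.aeval H)) r := by
    intro r
    have h0 := evalMat_algHom (f.comp (MvPolynomial.aeval H)) r
    have h1 : (fun i => (f.comp (MvPolynomial.aeval H)) (MvPolynomial.X i)) = fun i => f (H i) := by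
      funext i; simp
    rwa [h1] at h0
  have h2 : (fun i => evalMat X (H i)) = fun i => f (H i) := funext fun i => hev (H i)
  rw [h2, hg, hev, AlgHom.comp_apply]

theorem memZeroSet_map {d : ℕ} (K1 K2 : Ideal (MvPolynomial (Fin d) ℂ))
    (H : Fin d → MvPolynomial (Fin d) ℂ)
    (hH : ∀ p ∈ K1, MvPolynomial.aeval H p ∈ K2) {n : ℕ}
    (X : Fin d → Matrix (Fin n) (Fin n) ℂ) (hX : MemZeroSet K2 X) :
    MemZeroSet K1 fun i => evalMat X (H i) := by
  obtain ⟨f, hf⟩ := exists_algHom_of_commute X hX.1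
  have hXf : X = fun i => f (MvPolynomial.X i) := funext fun i => (hf i).symm
  have hev : ∀ r, evalMat X r = f r := fun r => by rw [hXf]; exact evalMat_algHom f r
  constructor
  · intro i j
    show Commute (evalMat X (H i)) (evalMat X (H j))
    rw [hev, hev, Commute, SemiconjBy, ← map_mul, ← map_mul, mul_comm]
  · intro p hp
    rw [evalMat_comp X hX.1]
    exact hX.2 _ (hH p hp)

theorem evalMat_comp_id {d : ℕ} (K2 : Ideal (MvPolynomial (Fin d) ℂ))
    (H1 H2 : Fin d → MvPolynomial (Fin d) ℂ)
    (hHH : ∀ i, MvPolynomial.aeval H1 (H2 i) - MvPolynomial.X i ∈ K2) {n : ℕ}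
    (X : Fin d → Matrix (Fin n) (Fin n) ℂ) (hX : MemZeroSet K2 X) :
    (fun i => evalMat (fun i' => evalMat X (H1 i')) (H2 i)) = X := by
  obtain ⟨f, hf⟩ := exists_algHom_of_commute X hX.1
  have hXf : X = fun i => f (MvPolynomial.X i) := funext fun i => (hf i).symm
  have hev : ∀ r, evalMat X r = f r := fun r => by rw [hXf]; exact evalMat_algHom f r
  funext i
  show evalMat (fun i' => evalMat X (H1 i')) (H2 i) = X i
  rw [evalMat_comp X hX.1, hev]
  have h0 : MvPolynomial.aeval H1 (H2 i)
      = MvPolynomial.X i + (MvPolynomial.aeval H1 (H2 i) - MvPolynomial.X i) := by ring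
  rw [h0, map_add, hf i]
  have h1 : f (MvPolynomial.aeval H1 (H2 i) - MvPolynomial.X i) = 0 := by
    rw [← hev]; exact hX.2 _ (hHH i)
  rw [h1, add_zero]

/-- The four zero-set conditions follow from the four ideal-membership facts. -/
theorem conds_of_mem {d : ℕ} (I J : Ideal (MvPolynomial (Fin d) ℂ))
    (F G : Fin d → MvPolynomial (Fin d) ℂ)
    (MF : ∀ p ∈ I, MvPolynomial.aeval F p ∈ J)
    (MG : ∀ p ∈ J, MvPolynomial.aeval G p ∈ I)
    (MFG : ∀ i, MvPolynomial.aeval F (G i) - MvPolynomial.X i ∈ J)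
    (MGF : ∀ i, MvPolynomial.aeval G (F i) - MvPolynomial.X i ∈ I) :
    (∀ (n : ℕ) (X : Fin d → Matrix (Fin n) (Fin n) ℂ), MemZeroSet J X →
        MemZeroSet I (fun i => evalMat X (F i))) ∧
      (∀ (n : ℕ) (X : Fin d → Matrix (Fin n) (Fin n) ℂ), MemZeroSet I X →
        MemZeroSet J (fun i => evalMat X (G i))) ∧
      (∀ (n : ℕ) (X : Fin d → Matrix (Fin n) (Fin n) ℂ), MemZeroSet J X →
        (fun i => evalMat (fun i' => evalMat X (F i')) (G i)) = X) ∧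
      (∀ (n : ℕ) (X : Fin d → Matrix (Fin n) (Fin n) ℂ), MemZeroSet I X →
        (fun i => evalMat (fun i' => evalMat X (G i')) (F i)) = X) :=
  ⟨fun _ X hX => memZeroSet_map I J F MF X hX,
   fun _ X hX => memZeroSet_map J I G MG X hX,
   fun _ X hX => evalMat_comp_id J F G MFG X hX,
   fun _ X hX => evalMat_comp_id I G F MGF X hX⟩


/-- `ℂ[z]/I ≅ ℂ[z]/J` as `ℂ`-algebras iff there are polynomial maps `F, G` restricting to
mutually inverse bijections between the matrix zero sets `Z(J)` and `Z(I)`. -/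
theorem stmt_12 {d : ℕ} (I J : Ideal (MvPolynomial (Fin d) ℂ)) :
    Nonempty ((MvPolynomial (Fin d) ℂ ⧸ I) ≃ₐ[ℂ] (MvPolynomial (Fin d) ℂ ⧸ J)) ↔
    ∃ F G : Fin d → MvPolynomial (Fin d) ℂ,
      (∀ (n : ℕ) (X : Fin d → Matrix (Fin n) (Fin n) ℂ), MemZeroSet J X →
        MemZeroSet I (fun i => evalMat X (F i))) ∧
      (∀ (n : ℕ) (X : Fin d → Matrix (Fin n) (Fin n) ℂ), MemZeroSet I X →
        MemZeroSet J (fun i => evalMat X (G i))) ∧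
      (∀ (n : ℕ) (X : Fin d → Matrix (Fin n) (Fin n) ℂ), MemZeroSet J X →
        (fun i => evalMat (fun i' => evalMat X (F i')) (G i)) = X) ∧
      (∀ (n : ℕ) (X : Fin d → Matrix (Fin n) (Fin n) ℂ), MemZeroSet I X →
        (fun i => evalMat (fun i' => evalMat X (G i')) (F i)) = X) := by
  constructor
  · rintro ⟨e⟩
    choose F hF using fun i =>
      Ideal.Quotient.mk_surjective (I := J) (e (Ideal.Quotient.mk I (MvPolynomial.X i)))
    choose G hG using fun i =>
      Ideal.Quotient.mk_surjective (I := I) (e.symm (Ideal.Quotient.mk J (MvPolynomial.X i)))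
    have keyF : ∀ p, Ideal.Quotient.mk J (MvPolynomial.aeval F p) = e (Ideal.Quotient.mk I p) := by
      have h0 : (Ideal.Quotient.mkₐ ℂ J).comp (MvPolynomial.aeval F)
          = (e.toAlgHom).comp (Ideal.Quotient.mkₐ ℂ I) :=
        MvPolynomial.algHom_ext fun i => by simp [hF i]
      exact fun p => DFunLike.congr_fun h0 p
    have keyG : ∀ p, Ideal.Quotient.mk I (MvPolynomial.aeval G p)
        = e.symm (Ideal.Quotient.mk J p) := by
      have h0 : (Ideal.Quotient.mkₐ ℂ I).comp (MvPolynomial.aeval G)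
          = (e.symm.toAlgHom).comp (Ideal.Quotient.mkₐ ℂ J) :=
        MvPolynomial.algHom_ext fun i => by simp [hG i]
      exact fun p => DFunLike.congr_fun h0 p
    refine ⟨F, G, conds_of_mem I J F G ?_ ?_ ?_ ?_⟩
    · intro p hp
      rw [← Ideal.Quotient.eq_zero_iff_mem, keyF, Ideal.Quotient.eq_zero_iff_mem.mpr hp,
        map_zero]
    · intro p hp
      rw [← Ideal.Quotient.eq_zero_iff_mem, keyG, Ideal.Quotient.eq_zero_iff_mem.mpr hp,
        map_zero]
    · intro i
      rw [← Ideal.Quotient.mk_eq_mk_iff_sub_mem, keyF, hG i, AlgEquiv.apply_symm_apply]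
    · intro i
      rw [← Ideal.Quotient.mk_eq_mk_iff_sub_mem, keyG, hF i, AlgEquiv.symm_apply_apply]
  · rintro ⟨F, G, h1, h2, h3, h4⟩
    have MF : ∀ p ∈ I, MvPolynomial.aeval F p ∈ J := by
      intro p hp
      refine mem_of_vanishing J _ fun n X hX => ?_
      rw [← evalMat_comp X hX.1]
      exact (h1 n X hX).2 p hp
    have MG : ∀ p ∈ J, MvPolynomial.aeval G p ∈ I := by
      intro p hp
      refine mem_of_vanishing I _ fun n X hX => ?_
      rw [← evalMat_comp X hX.1]
      exact (h2 n X hX).2 p hp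
    have MFG : ∀ i, MvPolynomial.aeval F (G i) - MvPolynomial.X i ∈ J := by
      intro i
      refine mem_of_vanishing J _ fun n X hX => ?_
      obtain ⟨f, hf⟩ := exists_algHom_of_commute X hX.1
      have hXf : X = fun i => f (MvPolynomial.X i) := funext fun i => (hf i).symm
      have hev : ∀ r, evalMat X r = f r := fun r => by rw [hXf]; exact evalMat_algHom f r
      have hc : evalMat (fun i' => evalMat X ((F) i')) ((G) i) = X i :=
        congr_fun (h3 n X hX) i
      rw [hev, map_sub, hf i, ← hev, ← evalMat_comp X hX.1, hc]
      exact sub_self _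
    have MGF : ∀ i, MvPolynomial.aeval G (F i) - MvPolynomial.X i ∈ I := by
      intro i
      refine mem_of_vanishing I _ fun n X hX => ?_
      obtain ⟨f, hf⟩ := exists_algHom_of_commute X hX.1
      have hXf : X = fun i => f (MvPolynomial.X i) := funext fun i => (hf i).symm
      have hev : ∀ r, evalMat X r = f r := fun r => by rw [hXf]; exact evalMat_algHom f r
      have hc : evalMat (fun i' => evalMat X ((G) i')) ((F) i) = X i :=
        congr_fun (h4 n X hX) i
      rw [hev, map_sub, hf i, ← hev, ← evalMat_comp X hX.1, hc]
      exact sub_self _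
    let φ : (MvPolynomial (Fin d) ℂ ⧸ I) →ₐ[ℂ] (MvPolynomial (Fin d) ℂ ⧸ J) :=
      Ideal.Quotient.liftₐ I ((Ideal.Quotient.mkₐ ℂ J).comp (MvPolynomial.aeval F))
        (fun p hp => by
          rw [AlgHom.comp_apply, Ideal.Quotient.mkₐ_eq_mk, Ideal.Quotient.eq_zero_iff_mem]
          exact MF p hp)
    let ψ : (MvPolynomial (Fin d) ℂ ⧸ J) →ₐ[ℂ] (MvPolynomial (Fin d) ℂ ⧸ I) :=
      Ideal.Quotient.liftₐ J ((Ideal.Quotient.mkₐ ℂ I).comp (MvPolynomial.aeval G))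
        (fun p hp => by
          rw [AlgHom.comp_apply, Ideal.Quotient.mkₐ_eq_mk, Ideal.Quotient.eq_zero_iff_mem]
          exact MG p hp)
    have hφ : ∀ p, φ (Ideal.Quotient.mk I p) = Ideal.Quotient.mk J (MvPolynomial.aeval F p) :=
      fun p => rfl
    have hψ : ∀ p, ψ (Ideal.Quotient.mk J p) = Ideal.Quotient.mk I (MvPolynomial.aeval G p) :=
      fun p => rfl
    have c1 : (φ.comp ψ).comp (Ideal.Quotient.mkₐ ℂ J) = Ideal.Quotient.mkₐ ℂ J := by
      refine MvPolynomial.algHom_ext fun i => ?_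
      have : φ (ψ (Ideal.Quotient.mk J (MvPolynomial.X i)))
          = Ideal.Quotient.mk J (MvPolynomial.aeval F (G i)) := by
        rw [hψ, MvPolynomial.aeval_X, hφ]
      simp only [AlgHom.comp_apply, Ideal.Quotient.mkₐ_eq_mk, this]
      rw [Ideal.Quotient.mk_eq_mk_iff_sub_mem]
      exact MFG i
    have c2 : (ψ.comp φ).comp (Ideal.Quotient.mkₐ ℂ I) = Ideal.Quotient.mkₐ ℂ I := by
      refine MvPolynomial.algHom_ext fun i => ?_
      have : ψ (φ (Ideal.Quotient.mk I (MvPolynomial.X i)))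
          = Ideal.Quotient.mk I (MvPolynomial.aeval G (F i)) := by
        rw [hφ, MvPolynomial.aeval_X, hψ]
      simp only [AlgHom.comp_apply, Ideal.Quotient.mkₐ_eq_mk, this]
      rw [Ideal.Quotient.mk_eq_mk_iff_sub_mem]
      exact MGF i
    refine ⟨AlgEquiv.ofAlgHom φ ψ ?_ ?_⟩
    · refine AlgHom.ext fun x => ?_
      obtain ⟨p, rfl⟩ := Ideal.Quotient.mkₐ_surjective ℂ J x
      exact (DFunLike.congr_fun c1 p : _)
    · refine AlgHom.ext fun x => ?_
      obtain ⟨p, rfl⟩ := Ideal.Quotient.mkₐ_surjective ℂ I x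
      exact (DFunLike.congr_fun c2 p : _)
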